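/- Let λ be a vector in R^{S×A} with nonnegative entries satisfying λ_{sa} ≥ 0 and, for each state s, Σ_a λ_{sa} ≥ ξ_s > 0. Define Π(λ)_{sa} = λ_{sa} / Σ_{a'} λ_{sa'}. Then for any two such vectors λ, λ', we have ‖Π(λ) − Π(λ')‖₂ ≤ (2 / min_s ξ_s) · ‖λ − λ'‖₁. -/

import Mathlib

/-- Lipschitz bound for the row-normalization map Π. -/
theorem row_normalization_lipschitz
    {S A : Type*} [Fintype S] [Fintype A] [Nonempty S]
    (ξ : S → ℝ) (hξ : ∀ s, 0 < ξ s)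
    (lam lam' : S → A → ℝ)
    (hnn : ∀ s a, 0 ≤ lam s a) (hnn' : ∀ s a, 0 ≤ lam' s a)
    (hrow : ∀ s, ξ s ≤ ∑ a, lam s a) (hrow' : ∀ s, ξ s ≤ ∑ a, lam' s a) :
    Real.sqrt (∑ s, ∑ a,
        (lam s a / ∑ a', lam s a' - lam' s a / ∑ a', lam' s a')^2)
      ≤ (2 / (Finset.univ.inf' Finset.univ_nonempty ξ)) *
        ∑ s, ∑ a, |lam s a - lam' s a| := by
  set m := Finset.univ.inf' Finset.univ_nonempty ξ with hm_def
  have hm : 0 < m := by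
    rw [hm_def, Finset.lt_inf'_iff]
    exact fun s _ => hξ s
  have hmle : ∀ s, m ≤ ξ s := fun s => Finset.inf'_le _ (Finset.mem_univ s)
  have h1 : Real.sqrt (∑ s, ∑ a,
        (lam s a / ∑ a', lam s a' - lam' s a / ∑ a', lam' s a')^2)
      ≤ ∑ s, ∑ a, |lam s a / ∑ a', lam s a' - lam' s a / ∑ a', lam' s a'| := by
    have hnonneg : 0 ≤ ∑ s, ∑ a, |lam s a / ∑ a', lam s a' - lam' s a / ∑ a', lam' s a'| := by
      positivity
    rw [show (∑ s, ∑ a, |lam s a / ∑ a', lam s a' - lam' s a / ∑ a', lam' s a'|)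
        = Real.sqrt ((∑ s, ∑ a, |lam s a / ∑ a', lam s a' - lam' s a / ∑ a', lam' s a'|)^2)
        from (Real.sqrt_sq hnonneg).symm]
    apply Real.sqrt_le_sqrt
    have h := Finset.sum_sq_le_sq_sum_of_nonneg
      (s := (Finset.univ : Finset (S × A)))
      (f := fun p => |lam p.1 p.2 / ∑ a', lam p.1 a' - lam' p.1 p.2 / ∑ a', lam' p.1 a'|)
      (fun i _ => abs_nonneg _)
    simpa [sq_abs, Fintype.sum_prod_type] using h
  have key : ∀ s, ∑ a, |lam s a / ∑ a', lam s a' - lam' s a / ∑ a', lam' s a'|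
      ≤ (2 / m) * ∑ a, |lam s a - lam' s a| := by
    intro s
    set R := ∑ a, lam s a with hR_def
    set R' := ∑ a, lam' s a with hR'_def
    have hR : 0 < R := lt_of_lt_of_le (hξ s) (hrow s)
    have hR' : 0 < R' := lt_of_lt_of_le (hξ s) (hrow' s)
    have hmR : m ≤ R := le_trans (hmle s) (hrow s)
    set D := ∑ a, |lam s a - lam' s a| with hD_def
    have hD : 0 ≤ D := Finset.sum_nonneg fun a _ => abs_nonneg _
    have hDR : |R' - R| ≤ D := by
      rw [show R' - R = ∑ a, (lam' s a - lam s a) from by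
        rw [hR_def, hR'_def, ← Finset.sum_sub_distrib]]
      refine (Finset.abs_sum_le_sum_abs _ _).trans ?_
      rw [hD_def]
      exact Finset.sum_le_sum fun a _ => le_of_eq (abs_sub_comm _ _)
    have pointwise : ∀ a, |lam s a / R - lam' s a / R'|
        ≤ |lam s a - lam' s a| / R + lam' s a * |R' - R| / (R * R') := by
      intro a
      have heq : lam s a / R - lam' s a / R'
          = (lam s a - lam' s a) / R + lam' s a * (R' - R) / (R * R') := by
        field_simp
        ring
      rw [heq]
      refine (abs_add_le _ _).trans ?_
      rw [abs_div, abs_div, abs_mul, abs_of_pos hR, abs_of_pos (mul_pos hR hR'),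
        abs_of_nonneg (hnn' s a)]
    calc ∑ a, |lam s a / R - lam' s a / R'|
        ≤ ∑ a, (|lam s a - lam' s a| / R + lam' s a * |R' - R| / (R * R')) :=
          Finset.sum_le_sum fun a _ => pointwise a
      _ = D / R + R' * |R' - R| / (R * R') := by
          rw [Finset.sum_add_distrib, ← Finset.sum_div, ← hD_def]
          congr 1
          rw [← Finset.sum_div, ← Finset.sum_mul, ← hR'_def]
      _ = D / R + |R' - R| / R := by
          congr 1
          field_simp
      _ ≤ D / m + D / m := by
          gcongr <;> first | exact hm | exact hDR
      _ = (2 / m) * D := by ring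
  refine h1.trans ?_
  rw [Finset.mul_sum]
  exact Finset.sum_le_sum fun s _ => key s
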